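/- arXiv:1702.05992 — 4 statements merged into one kernel-verified Lean document; each statement's English description precedes it below -/
import Mathlib

section
/- Let (ν_x̄) be a family of m probability measures on a finite set X with invertible Gram matrix Γ (with respect to ⟨ν,ρ⟩* = Σ_x ν(x)ρ(x)/μ(x)). If μ is a convex combination of the ν_x̄, then Trace(Γ⁻¹) ≥ 1, with equality if and only if the ν_x̄ are pairwise orthogonal. -/
open Finset

/-- If the Gram matrix `Γ` of a family of probability measures `ν` is invertible
and `μ` is a convex combination of the `ν_a`, then `Trace(Γ⁻¹) ≥ 1`, with equality iff the
`ν_a` are pairwise orthogonal in `⟨·,·⟩*`. -/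
theorem stmt1 {X Xbar : Type*} [Fintype X] [Fintype Xbar] [DecidableEq Xbar]
    (μ : X → ℝ) (hμpos : ∀ x, 0 < μ x) (hμsum : ∑ x, μ x = 1)
    (ν : Xbar → X → ℝ) (hνnn : ∀ a x, 0 ≤ ν a x) (hνsum : ∀ a, ∑ x, ν a x = 1)
    (Γ : Matrix Xbar Xbar ℝ) (hΓ : ∀ a b, Γ a b = ∑ x, ν a x * ν b x / μ x)
    (hinv : IsUnit Γ.det)
    (α : Xbar → ℝ) (hαnn : ∀ a, 0 ≤ α a) (hαsum : ∑ a, α a = 1)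
    (hconv : ∀ x, μ x = ∑ a, α a * ν a x) :
    1 ≤ Γ⁻¹.trace ∧
      (Γ⁻¹.trace = 1 ↔ ∀ a b, a ≠ b → ∑ x, ν a x * ν b x / μ x = 0) := by
  classical
  have hμne : ∀ x, μ x ≠ 0 := fun x => (hμpos x).ne'
  -- nonnegativity of Gram entries
  have hΓnn : ∀ a b, 0 ≤ Γ a b := by
    intro a b
    rw [hΓ]
    exact Finset.sum_nonneg fun x _ =>
      div_nonneg (mul_nonneg (hνnn a x) (hνnn b x)) (hμpos x).le
  -- positivity of diagonal entries
  have hΓpos : ∀ a, 0 < Γ a a := by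
    intro a
    rcases (hΓnn a a).lt_or_eq with h | h
    · exact h
    · exfalso
      have hz := (Finset.sum_eq_zero_iff_of_nonneg
        (fun x _ => div_nonneg (mul_nonneg (hνnn a x) (hνnn a x)) (hμpos x).le)).1
        ((hΓ a a) ▸ h.symm)
      have : ∑ x, ν a x = 0 := by
        refine Finset.sum_eq_zero fun x _ => ?_
        have h2 := hz x (Finset.mem_univ x)
        rw [div_eq_zero_iff] at h2
        rcases h2 with h2 | h2
        · exact mul_self_eq_zero.mp h2
        · exact absurd h2 (hμne x)
      rw [hνsum a] at this
      norm_num at this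
  -- Γ α = 1 (all-ones vector)
  have hΓα : ∀ a, ∑ b, Γ a b * α b = 1 := by
    intro a
    calc ∑ b, Γ a b * α b = ∑ b, ∑ x, ν a x * ν b x / μ x * α b := by
          simp_rw [hΓ, Finset.sum_mul]
      _ = ∑ x, ∑ b, ν a x * ν b x / μ x * α b := Finset.sum_comm
      _ = ∑ x, ν a x := by
          refine Finset.sum_congr rfl fun x _ => ?_
          have h1 : ∑ b, ν a x * ν b x / μ x * α b = ν a x / μ x * ∑ b, α b * ν b x := by
            rw [Finset.mul_sum]
            exact Finset.sum_congr rfl fun b _ => by ring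
          rw [h1, ← hconv x, div_mul_cancel₀ _ (hμne x)]
      _ = 1 := hνsum a
  -- inverse matrix facts
  have hΓB : Γ * Γ⁻¹ = 1 := Matrix.mul_nonsing_inv Γ hinv
  -- diagonal of inverse: 1 ≤ Γ a a * Γ⁻¹ a a
  have hBaa : ∀ a, 1 ≤ Γ a a * Γ⁻¹ a a := by
    intro a
    set w : Xbar → ℝ := fun b => Γ⁻¹ b a with hw
    have fact1 : ∑ b, Γ a b * w b = 1 := by
      have := congrArg (fun M => M a a) hΓB
      simpa [Matrix.mul_apply, Matrix.one_apply] using this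
    have fact0 : ∀ b, ∑ c, Γ b c * w c = if b = a then (1:ℝ) else 0 := by
      intro b
      have := congrArg (fun M => M b a) hΓB
      simpa [Matrix.mul_apply, Matrix.one_apply] using this
    have fact2 : ∑ b, ∑ c, w b * w c * Γ b c = Γ⁻¹ a a := by
      calc ∑ b, ∑ c, w b * w c * Γ b c = ∑ b, w b * ∑ c, Γ b c * w c := by
            refine Finset.sum_congr rfl fun b _ => ?_
            rw [Finset.mul_sum]
            exact Finset.sum_congr rfl fun c _ => by ring
        _ = ∑ b, w b * (if b = a then (1:ℝ) else 0) := by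
            refine Finset.sum_congr rfl fun b _ => by rw [fact0 b]
        _ = w a := by simp
        _ = Γ⁻¹ a a := rfl
    set q : X → ℝ := fun x => ∑ b, w b * ν b x with hq
    have hA : ∑ x, ν a x * q x / μ x = 1 := by
      calc ∑ x, ν a x * q x / μ x = ∑ x, ∑ b, ν a x * ν b x / μ x * w b := by
            refine Finset.sum_congr rfl fun x _ => ?_
            rw [hq]
            simp only []
            rw [Finset.mul_sum, Finset.sum_div]
            exact Finset.sum_congr rfl fun b _ => by ring
        _ = ∑ b, ∑ x, ν a x * ν b x / μ x * w b := Finset.sum_comm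
        _ = ∑ b, Γ a b * w b := by
            refine Finset.sum_congr rfl fun b _ => ?_
            rw [hΓ, Finset.sum_mul]
        _ = 1 := fact1
    have hQ : ∑ x, q x * q x / μ x = Γ⁻¹ a a := by
      calc ∑ x, q x * q x / μ x = ∑ x, ∑ b, ∑ c, w b * w c * (ν b x * ν c x / μ x) := by
            refine Finset.sum_congr rfl fun x _ => ?_
            rw [hq]
            simp only []
            rw [Finset.sum_mul_sum, Finset.sum_div]
            refine Finset.sum_congr rfl fun b _ => ?_
            rw [Finset.sum_div]
            exact Finset.sum_congr rfl fun c _ => by ring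
        _ = ∑ b, ∑ c, ∑ x, w b * w c * (ν b x * ν c x / μ x) := by
            rw [Finset.sum_comm]
            exact Finset.sum_congr rfl fun b _ => Finset.sum_comm
        _ = ∑ b, ∑ c, w b * w c * Γ b c := by
            refine Finset.sum_congr rfl fun b _ => Finset.sum_congr rfl fun c _ => ?_
            rw [hΓ, Finset.mul_sum]
        _ = Γ⁻¹ a a := fact2
    have hcs := Finset.sum_sq_le_sum_mul_sum_of_sq_eq_mul (Finset.univ : Finset X)
      (r := fun x => ν a x * q x / μ x)
      (f := fun x => ν a x * ν a x / μ x)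
      (g := fun x => q x * q x / μ x)
      (fun x _ => div_nonneg (mul_nonneg (hνnn a x) (hνnn a x)) (hμpos x).le)
      (fun x _ => div_nonneg (mul_self_nonneg _) (hμpos x).le)
      (fun x _ => by field_simp)
    rw [hA, hQ] at hcs
    have hgaa : ∑ x, ν a x * ν a x / μ x = Γ a a := (hΓ a a).symm
    rw [hgaa] at hcs
    simpa using hcs
  -- key sums
  set S : ℝ := ∑ a, α a * α a * Γ a a with hSdef
  set T : ℝ := ∑ a, (Γ a a)⁻¹ with hTdef
  set R : ℝ := ∑ a, ∑ b ∈ Finset.univ.erase a, α a * α b * Γ a b with hRdef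
  have hRnn : 0 ≤ R :=
    Finset.sum_nonneg fun a _ => Finset.sum_nonneg fun b _ =>
      mul_nonneg (mul_nonneg (hαnn a) (hαnn b)) (hΓnn a b)
  have hSR : S + R = 1 := by
    have h1 : ∑ a, ∑ b, α a * α b * Γ a b = 1 := by
      calc ∑ a, ∑ b, α a * α b * Γ a b = ∑ a, α a * ∑ b, Γ a b * α b := by
            refine Finset.sum_congr rfl fun a _ => ?_
            rw [Finset.mul_sum]
            exact Finset.sum_congr rfl fun b _ => by ring
        _ = ∑ a, α a := by
            refine Finset.sum_congr rfl fun a _ => by rw [hΓα a, mul_one]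
        _ = 1 := hαsum
    rw [← h1, hSdef, hRdef, ← Finset.sum_add_distrib]
    refine Finset.sum_congr rfl fun a _ => ?_
    exact (Finset.add_sum_erase Finset.univ (fun b => α a * α b * Γ a b)
      (Finset.mem_univ a))
  have hS1 : S ≤ 1 := by linarith
  have hTnn : 0 ≤ T := Finset.sum_nonneg fun a _ => inv_nonneg.mpr (hΓpos a).le
  have hST : 1 ≤ S * T := by
    have hcs := Finset.sum_sq_le_sum_mul_sum_of_sq_eq_mul (Finset.univ : Finset Xbar)
      (r := α)
      (f := fun a => α a * α a * Γ a a)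
      (g := fun a => (Γ a a)⁻¹)
      (fun a _ => mul_nonneg (mul_nonneg (hαnn a) (hαnn a)) (hΓpos a).le)
      (fun a _ => inv_nonneg.mpr (hΓpos a).le)
      (fun a _ => by rw [mul_assoc, mul_inv_cancel₀ (hΓpos a).ne', mul_one]; ring)
    rw [hαsum] at hcs
    simpa using hcs
  have hTtr : T ≤ Γ⁻¹.trace := by
    rw [Matrix.trace]
    refine Finset.sum_le_sum fun a _ => ?_
    rw [inv_eq_one_div, div_le_iff₀ (hΓpos a)]
    have := hBaa a
    unfold Matrix.diag
    linarith
  have hmain : 1 ≤ Γ⁻¹.trace := by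
    have h1 : S * T ≤ T := mul_le_of_le_one_left hTnn hS1
    linarith
  refine ⟨hmain, ?_, ?_⟩
  · -- trace = 1 → orthogonality
    intro htr a b hab
    have hT1 : T = 1 := by
      have h1 : S * T ≤ T := mul_le_of_le_one_left hTnn hS1
      linarith
    have hSS : S = 1 := by
      rw [hT1, mul_one] at hST
      linarith
    have hR0 : R = 0 := by linarith
    -- sum of squares identity forces α a * Γ a a = 1
    have hkey : ∀ c, α c * Γ c c = 1 := by
      have hzero : ∑ c, (α c * Γ c c - 1) ^ 2 * (Γ c c)⁻¹ = 0 := by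
        have hterm : ∀ c, (α c * Γ c c - 1) ^ 2 * (Γ c c)⁻¹
            = α c * α c * Γ c c - 2 * α c + (Γ c c)⁻¹ := by
          intro c
          field_simp [(hΓpos c).ne']
          ring
        rw [Finset.sum_congr rfl fun c _ => hterm c]
        have : ∑ c, (α c * α c * Γ c c - 2 * α c + (Γ c c)⁻¹)
            = S - 2 * (∑ c, α c) + T := by
          rw [Finset.sum_add_distrib, Finset.sum_sub_distrib, ← Finset.mul_sum]
        rw [this, hαsum, hSS, hT1]
        ring
      intro c
      have hc := (Finset.sum_eq_zero_iff_of_nonneg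
        (fun c _ => mul_nonneg (sq_nonneg _) (inv_nonneg.mpr (hΓpos c).le))).1
        hzero c (Finset.mem_univ c)
      have h2 : (α c * Γ c c - 1) ^ 2 = 0 := by
        rcases mul_eq_zero.mp hc with h | h
        · exact h
        · exact absurd h (inv_pos.mpr (hΓpos c)).ne'
      have := pow_eq_zero_iff (n := 2) (by norm_num) |>.mp h2
      linarith
    have hαpos : ∀ c, 0 < α c := by
      intro c
      have h := hkey c
      have := hΓpos c
      nlinarith
    -- R = 0 with nonneg terms forces each off-diagonal term zero
    have hterm0 : α a * α b * Γ a b = 0 := by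
      have h1 := (Finset.sum_eq_zero_iff_of_nonneg
        (fun c _ => Finset.sum_nonneg fun d _ =>
          mul_nonneg (mul_nonneg (hαnn c) (hαnn d)) (hΓnn c d))).1 hR0 a (Finset.mem_univ a)
      have h2 := (Finset.sum_eq_zero_iff_of_nonneg
        (fun d _ => mul_nonneg (mul_nonneg (hαnn a) (hαnn d)) (hΓnn a d))).1 h1 b
        (Finset.mem_erase.mpr ⟨hab.symm, Finset.mem_univ b⟩)
      exact h2
    have hΓab : Γ a b = 0 := by
      have ha := hαpos a
      have hb := hαpos b
      rcases mul_eq_zero.mp hterm0 with h | h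
      · rcases mul_eq_zero.mp h with h' | h'
        · exact absurd h' ha.ne'
        · exact absurd h' hb.ne'
      · exact h
    rw [← hΓ]
    exact hΓab
  · -- orthogonality → trace = 1
    intro horth
    have hΓ0 : ∀ a b, a ≠ b → Γ a b = 0 := by
      intro a b hab
      rw [hΓ]
      exact horth a b hab
    have hdiag : Γ = Matrix.diagonal (fun a => Γ a a) := by
      ext a b
      by_cases h : a = b
      · subst h
        simp [Matrix.diagonal_apply_eq]
      · rw [Matrix.diagonal_apply_ne _ h]
        exact hΓ0 a b h
    have hα : ∀ a, α a = (Γ a a)⁻¹ := by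
      intro a
      have h1 : ∑ b, Γ a b * α b = Γ a a * α a := by
        refine Finset.sum_eq_single a ?_ ?_
        · intro b _ hb
          rw [hΓ0 a b (Ne.symm hb), zero_mul]
        · intro h
          exact absurd (Finset.mem_univ a) h
      have h2 : Γ a a * α a = 1 := by rw [← h1, hΓα a]
      field_simp [(hΓpos a).ne']
      linarith
    have htr : Γ⁻¹.trace = ∑ a, (Γ a a)⁻¹ := by
      have hinv2 : Γ⁻¹ = Matrix.diagonal (fun a => (Γ a a)⁻¹) := by
        apply Matrix.inv_eq_right_inv
        ext i j
        rw [Matrix.mul_apply]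
        simp only [Matrix.diagonal_apply, mul_ite, mul_zero]
        rw [Finset.sum_ite_eq' Finset.univ j (fun k => Γ i k * (Γ k k)⁻¹)]
        simp only [Finset.mem_univ, if_true]
        by_cases h : i = j
        · subst h
          rw [Matrix.one_apply_eq, mul_inv_cancel₀ (hΓpos i).ne']
        · rw [Matrix.one_apply_ne h, hΓ0 i j h, zero_mul]
      rw [hinv2, Matrix.trace_diagonal]
    rw [htr, ← hαsum]
    exact Finset.sum_congr rfl fun a _ => (hα a).symm
end

section
/- For any real numbers 1 = θ_0 > θ_1 ≥ θ_2 ≥ … ≥ θ_{m-1} ≥ 0, there exists an irreducible stochastic m×m matrix P̄, reversible with respect to the probability measure μ̄ given by μ̄(k) = 1/(k(k+1)) for 1 ≤ k ≤ m−1 and μ̄(m) = 1/m, whose eigenvalues are exactly θ_0, θ_1, …, θ_{m-1}. -/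
open Finset

namespace Stmt6Aux
open Polynomial

variable {m : ℕ}

/-- charpoly is invariant under conjugation. -/
lemma charpoly_conj {n : Type*} [DecidableEq n] [Fintype n] {R : Type*} [CommRing R]
    (A B M : Matrix n n R) (h : A * B = 1) :
    (A * M * B).charpoly = M.charpoly := by
  have key : Matrix.charmatrix (A * M * B)
      = A.map C * Matrix.charmatrix M * B.map C := by
    unfold Matrix.charmatrix
    have h1 : ((C : R →+* R[X]).mapMatrix A) * ((C : R →+* R[X]).mapMatrix B) = 1 := by
      rw [← map_mul, h, map_one]
    have h2 : A.map C * Matrix.scalar n (X : R[X]) * B.map C = Matrix.scalar n (X : R[X]) := by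
      have := (Matrix.scalar_commute (X : R[X]) (fun r' => Commute.all _ _)
        ((C : R →+* R[X]).mapMatrix A)).symm
      calc A.map C * Matrix.scalar n (X : R[X]) * B.map C
          = Matrix.scalar n (X : R[X]) * (A.map C * B.map C) := by
            rw [show (A.map C : Matrix n n R[X]) = (C : R →+* R[X]).mapMatrix A from rfl,
              this.eq, mul_assoc]
        _ = Matrix.scalar n (X : R[X]) := by
            rw [show (A.map C : Matrix n n R[X]) = (C : R →+* R[X]).mapMatrix A from rfl,
              show (B.map C : Matrix n n R[X]) = (C : R →+* R[X]).mapMatrix B from rfl, h1, mul_one]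
    rw [mul_sub, sub_mul, h2]
    congr 1
    simp only [RingHom.mapMatrix_apply]
    rw [← Matrix.map_mul, ← Matrix.map_mul]
  have hBA : B * A = 1 := mul_eq_one_comm.mp h
  have hdet : (A.map C : Matrix n n R[X]).det * (B.map C).det = 1 := by
    rw [← Matrix.det_mul, ← Matrix.map_mul, h]
    simp
  unfold Matrix.charpoly
  rw [key, Matrix.det_mul, Matrix.det_mul]
  calc (A.map C).det * (Matrix.charmatrix M).det * (B.map C).det
      = (Matrix.charmatrix M).det * ((A.map C).det * (B.map C).det) := by ring
    _ = (Matrix.charmatrix M).det := by rw [hdet, mul_one]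

lemma charpoly_diagonal {n : Type*} [DecidableEq n] [Fintype n] [LinearOrder n]
    {R : Type*} [CommRing R] (d : n → R) :
    (Matrix.diagonal d).charpoly = ∏ i, (X - C (d i)) := by
  rw [Matrix.charpoly_of_upperTriangular _ (Matrix.blockTriangular_diagonal d)]
  simp

lemma tele (n : ℕ) : ∑ k ∈ range n, (1:ℝ)/((k+1)*(k+2)) = 1 - 1/(n+1) := by
  induction n with
  | zero => simp
  | succ n ih =>
    rw [Finset.sum_range_succ, ih]
    have h1 : ((n:ℝ)+1) ≠ 0 := by positivity
    have h2 : ((n:ℝ)+2) ≠ 0 := by positivity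
    push_cast
    field_simp
    ring


variable {m : ℕ}

/-- Helmert-type matrix. -/
noncomputable def Am (m : ℕ) : Matrix (Fin m) (Fin m) ℝ :=
  Matrix.of fun j i =>
    if (i:ℕ) ≤ (j:ℕ) then 1 else if (i:ℕ) = (j:ℕ)+1 then -(((j:ℕ):ℝ)+1) else 0

noncomputable def mup (m : ℕ) (n : ℕ) : ℝ :=
  if n = m - 1 then (1:ℝ)/m else 1/(((n:ℝ)+1)*((n:ℝ)+2))

noncomputable def mu (m : ℕ) (k : Fin m) : ℝ := mup m (k:ℕ)

lemma mup_pos (hm : 1 ≤ m) (n : ℕ) : 0 < mup m n := by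
  unfold mup
  split
  · have : (0:ℝ) < m := by exact_mod_cast hm
    positivity
  · positivity

lemma Am_apply_le {j i : Fin m} (h : (i:ℕ) ≤ (j:ℕ)) : Am m j i = 1 := by
  show (if (i:ℕ) ≤ (j:ℕ) then (1:ℝ) else _) = 1
  rw [if_pos h]

lemma Am_apply_succ {j i : Fin m} (h : (i:ℕ) = (j:ℕ)+1) : Am m j i = -(((j:ℕ):ℝ)+1) := by
  show (if (i:ℕ) ≤ (j:ℕ) then (1:ℝ) else _) = _
  rw [if_neg (by omega), if_pos h]

lemma Am_apply_zero {j i : Fin m} (h1 : ¬ (i:ℕ) ≤ (j:ℕ)) (h2 : (i:ℕ) ≠ (j:ℕ)+1) :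
    Am m j i = 0 := by
  show (if (i:ℕ) ≤ (j:ℕ) then (1:ℝ) else _) = _
  rw [if_neg h1, if_neg h2]

lemma sum_split (g : Fin m → ℝ) (j : Fin m)
    (hg : ∀ i : Fin m, (j:ℕ)+1 < (i:ℕ) → g i = 0) :
    ∑ i, g i = ∑ i ∈ Iic j, g i
      + (if hh : (j:ℕ)+1 < m then g ⟨(j:ℕ)+1, hh⟩ else 0) := by
  rw [← Finset.sum_add_sum_compl (Iic j) g]
  congr 1
  by_cases hh : (j:ℕ)+1 < m
  · rw [dif_pos hh]
    apply Finset.sum_eq_single_of_mem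
    · simp [Fin.lt_def]
    · intro b hb hne
      apply hg
      simp only [mem_compl, mem_Iic, not_le, Fin.lt_def] at hb
      have : (b:ℕ) ≠ (j:ℕ)+1 := fun h => hne (Fin.ext h)
      omega
  · rw [dif_neg hh]
    apply Finset.sum_eq_zero
    intro i hi
    simp only [mem_compl, mem_Iic, not_le, Fin.lt_def] at hi
    have := i.isLt
    omega

lemma master (f : Fin m → ℝ) (j k : Fin m) (hjk : j ≤ k) :
    ∑ i, Am m j i * Am m k i * f i
      = ∑ i ∈ Iic j, f i +
        (if hh : (j:ℕ)+1 < m then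
          (if j = k then (((j:ℕ):ℝ)+1)^2 else -(((j:ℕ):ℝ)+1)) * f ⟨(j:ℕ)+1, hh⟩
         else 0) := by
  rw [sum_split (fun i => Am m j i * Am m k i * f i) j ?_]
  · congr 1
    · apply Finset.sum_congr rfl
      intro i hi
      rw [mem_Iic] at hi
      have h1 : (i:ℕ) ≤ (j:ℕ) := hi
      have h2 : (i:ℕ) ≤ (k:ℕ) := le_trans h1 hjk
      show Am m j i * Am m k i * f i = f i
      rw [Am_apply_le h1, Am_apply_le h2]
      ring
    · by_cases hh : (j:ℕ)+1 < m
      · rw [dif_pos hh, dif_pos hh]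
        show Am m j ⟨(j:ℕ)+1, hh⟩ * Am m k ⟨(j:ℕ)+1, hh⟩ * f _ = _
        have hAj : Am m j ⟨(j:ℕ)+1, hh⟩ = -(((j:ℕ):ℝ)+1) := Am_apply_succ rfl
        by_cases hjk' : j = k
        · subst hjk'
          rw [hAj, if_pos rfl]
          ring
        · have hlt : (j:ℕ) < (k:ℕ) := lt_of_le_of_ne hjk (fun h => hjk' (Fin.ext h))
          have hAk : Am m k ⟨(j:ℕ)+1, hh⟩ = 1 := Am_apply_le (by simp only [Fin.val_mk]; omega)
          rw [hAj, hAk, if_neg hjk']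
          ring
      · rw [dif_neg hh, dif_neg hh]
  · intro i hi
    have hA : Am m j i = 0 := Am_apply_zero (by omega) (by omega)
    show Am m j i * Am m k i * f i = 0
    rw [hA]; ring

end Stmt6Aux

namespace Stmt6Aux2
open Stmt6Aux

lemma tele (n : ℕ) : ∑ k ∈ range n, (1:ℝ)/(((k:ℝ)+1)*((k:ℝ)+2)) = 1 - 1/((n:ℝ)+1) := by
  induction n with
  | zero => simp
  | succ n ih =>
    rw [Finset.sum_range_succ, ih]
    have h1 : ((n:ℝ)+1) ≠ 0 := by positivity
    have h2 : ((n:ℝ)+2) ≠ 0 := by positivity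
    push_cast
    field_simp
    ring

lemma tail {m : ℕ} (hm : 1 ≤ m) (i : ℕ) (hi : i < m) :
    ∑ n ∈ Ico i m, mup m n = 1/((i:ℝ)+1) := by
  have hm1 : m - 1 + 1 = m := by omega
  have hile : i ≤ m - 1 := by omega
  have hsplit := Finset.sum_Ico_succ_top (f := mup m) hile
  rw [hm1] at hsplit
  rw [hsplit]
  have h1 : ∑ n ∈ Ico i (m-1), mup m n = ∑ n ∈ Ico i (m-1), (1:ℝ)/(((n:ℝ)+1)*((n:ℝ)+2)) := by
    apply Finset.sum_congr rfl
    intro n hn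
    rw [mem_Ico] at hn
    unfold mup
    rw [if_neg (by omega)]
  have h2 : mup m (m-1) = 1/(m:ℝ) := by unfold mup; rw [if_pos rfl]
  rw [h1, h2, Finset.sum_Ico_eq_sub _ hile, tele, tele]
  have h3 : ((m-1:ℕ):ℝ) = (m:ℝ) - 1 := by
    rw [Nat.cast_sub hm]; norm_num
  rw [h3, show (m:ℝ)-1+1 = (m:ℝ) by ring]
  ring

noncomputable def colF (m i n : ℕ) : ℝ :=
  (if i ≤ n then (1:ℝ) else if i = n+1 then -((n:ℝ)+1) else 0) * mup m n

lemma colsum {m : ℕ} (hm : 1 ≤ m) (i : Fin m) :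
    ∑ k, Am m k i * mu m k = if (i:ℕ) = 0 then 1 else 0 := by
  have hstep : (∑ k, Am m k i * mu m k) = ∑ n ∈ range m, colF m (i:ℕ) n := by
    rw [← Fin.sum_univ_eq_sum_range (colF m (i:ℕ)) m]
    rfl
  rw [hstep, Finset.range_eq_Ico,
    ← Finset.sum_Ico_consecutive (colF m (i:ℕ)) (Nat.zero_le (i:ℕ)) (le_of_lt i.isLt)]
  have h2 : ∑ n ∈ Ico (i:ℕ) m, colF m (i:ℕ) n = 1/(((i:ℕ):ℝ)+1) := by
    rw [show ∑ n ∈ Ico (i:ℕ) m, colF m (i:ℕ) n = ∑ n ∈ Ico (i:ℕ) m, mup m n from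
      Finset.sum_congr rfl (fun n hn => by
        rw [mem_Ico] at hn
        unfold colF
        rw [if_pos hn.1, one_mul])]
    exact tail hm _ i.isLt
  rw [h2]
  by_cases hi0 : (i:ℕ) = 0
  · rw [if_pos hi0, hi0]
    norm_num
  · rw [if_neg hi0]
    obtain ⟨c, hc⟩ : ∃ c, (i:ℕ) = c + 1 := ⟨(i:ℕ)-1, by omega⟩
    have h3 : ∑ n ∈ Ico 0 (i:ℕ), colF m (i:ℕ) n = colF m (i:ℕ) c := by
      apply Finset.sum_eq_single_of_mem c (by rw [mem_Ico]; omega)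
      intro b hb hbc
      rw [mem_Ico] at hb
      unfold colF
      rw [if_neg (by omega), if_neg (by omega), zero_mul]
    have h4 : colF m (i:ℕ) c = -((c:ℝ)+1) * mup m c := by
      unfold colF
      rw [if_neg (by omega), if_pos (by omega)]
    have h5 : mup m c = 1/(((c:ℝ)+1)*((c:ℝ)+2)) := by
      unfold mup
      rw [if_neg (by omega)]
    rw [h3, h4, h5, hc]
    have hc1 : ((c:ℝ)+1) ≠ 0 := by positivity
    have hc2 : ((c:ℝ)+2) ≠ 0 := by positivity
    push_cast
    field_simp
    ring

end Stmt6Aux2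

namespace Stmt6Aux3
open Stmt6Aux Stmt6Aux2

noncomputable def Bm (m : ℕ) : Matrix (Fin m) (Fin m) ℝ :=
  Matrix.of fun i k => Am m k i * mu m k

lemma sum_Iic_const {m : ℕ} (j : Fin m) (c : ℝ) :
    ∑ _i ∈ Iic j, c = (((j:ℕ):ℝ)+1) * c := by
  rw [Finset.sum_const, Fin.card_Iic, nsmul_eq_mul]
  push_cast
  ring

lemma AmBm {m : ℕ} (hm : 1 ≤ m) : Am m * Bm m = 1 := by
  ext j k
  rw [Matrix.mul_apply]
  have hcong : ∀ i, Am m j i * Bm m i k = Am m j i * Am m k i * (fun _ : Fin m => mu m k) i :=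
    fun i => by show Am m j i * (Am m k i * mu m k) = _; ring
  rw [Finset.sum_congr rfl (fun i _ => hcong i)]
  rcases le_or_gt j k with hjk | hjk
  · rw [master (fun _ => mu m k) j k hjk, sum_Iic_const]
    by_cases hjk' : j = k
    · subst hjk'
      rw [Matrix.one_apply_eq]
      by_cases hh : (j:ℕ)+1 < m
      · rw [dif_pos hh, if_pos rfl]
        have hj : mu m j = 1/((((j:ℕ):ℝ)+1)*(((j:ℕ):ℝ)+2)) := by
          show mup m (j:ℕ) = _
          unfold mup
          rw [if_neg (by omega)]
        rw [hj]
        have h1 : (((j:ℕ):ℝ)+1) ≠ 0 := by positivity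
        have h2 : (((j:ℕ):ℝ)+2) ≠ 0 := by positivity
        field_simp
        ring
      · rw [dif_neg hh, add_zero]
        have hj : mu m j = 1/(m:ℝ) := by
          show mup m (j:ℕ) = _
          unfold mup
          rw [if_pos (by omega)]
        have hjm : ((j:ℕ):ℝ) + 1 = (m:ℝ) := by
          have : (j:ℕ) + 1 = m := by have := j.isLt; omega
          exact_mod_cast this
        rw [hj, hjm]
        have : (m:ℝ) ≠ 0 := by
          have : (0:ℝ) < m := by exact_mod_cast hm
          positivity
        field_simp
    · have hlt : (j:ℕ) < (k:ℕ) := lt_of_le_of_ne hjk (fun h => hjk' (Fin.ext h))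
      have hh : (j:ℕ)+1 < m := by have := k.isLt; omega
      rw [dif_pos hh, if_neg hjk', Matrix.one_apply_ne hjk']
      ring
  · have hkj : k ≤ j := le_of_lt hjk
    have hne : k ≠ j := ne_of_lt hjk
    have hcong2 : ∀ i ∈ (univ : Finset (Fin m)),
        Am m j i * Am m k i * (fun _ : Fin m => mu m k) i
          = Am m k i * Am m j i * (fun _ : Fin m => mu m k) i := fun i _ => by ring
    rw [Finset.sum_congr rfl hcong2, master (fun _ => mu m k) k j hkj,
      sum_Iic_const, Matrix.one_apply_ne (Ne.symm hne)]
    have hh : (k:ℕ)+1 < m := by have := j.isLt; have : (k:ℕ) < (j:ℕ) := hjk; omega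
    rw [dif_pos hh, if_neg hne]
    ring

end Stmt6Aux3

open Stmt6Aux Stmt6Aux2 Stmt6Aux3 in
/-- for any `1 = θ 0 > θ 1 ≥ … ≥ θ (m-1) ≥ 0` there exists an irreducible
stochastic `m × m` matrix, reversible with respect to the probability measure
`μ̄(k) = 1/(k(k+1))` for `1 ≤ k ≤ m-1` and `μ̄(m) = 1/m` (indexed here by `k : Fin m`,
so `μ̄ k = 1/((k+1)(k+2))` for `k < m-1` and `μ̄ (m-1) = 1/m`), whose eigenvalues
(i.e. the roots of its characteristic polynomial, with multiplicity) are exactly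
`θ 0, …, θ (m-1)`. -/
theorem stmt6 {m : ℕ} (hm : 1 ≤ m) (θ : Fin m → ℝ)
    (h0 : θ ⟨0, hm⟩ = 1) (hdec : Antitone θ) (hnn : ∀ j, 0 ≤ θ j)
    (hlt : ∀ j : Fin m, j ≠ ⟨0, hm⟩ → θ j < 1) :
    ∃ Pbar : Matrix (Fin m) (Fin m) ℝ,
      (∀ j k, 0 ≤ Pbar j k) ∧ (∀ j, ∑ k, Pbar j k = 1) ∧
      (∀ j k, ∃ l, 0 < (Pbar ^ l) j k) ∧
      (∀ j k : Fin m,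
        (if (j : ℕ) = m - 1 then (1 : ℝ) / m else 1 / (((j : ℕ) + 1) * ((j : ℕ) + 2)))
            * Pbar j k =
          (if (k : ℕ) = m - 1 then (1 : ℝ) / m else 1 / (((k : ℕ) + 1) * ((k : ℕ) + 2)))
            * Pbar k j) ∧
      Pbar.charpoly = ∏ j, (Polynomial.X - Polynomial.C (θ j)) := by
  have hAB := AmBm hm
  have hmupos : ∀ k : Fin m, 0 < mu m k := fun k => mup_pos hm _
  set D : Matrix (Fin m) (Fin m) ℝ := Matrix.diagonal θ with hD
  have hPentry : ∀ j k, (Am m * D * Bm m) j k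
      = (∑ i, Am m j i * Am m k i * θ i) * mu m k := by
    intro j k
    rw [Matrix.mul_apply, Finset.sum_mul]
    apply Finset.sum_congr rfl
    intro i _
    rw [hD, Matrix.mul_diagonal]
    show Am m j i * θ i * (Am m k i * mu m k) = _
    ring
  have hSsymm : ∀ j k, (∑ i, Am m j i * Am m k i * θ i)
      = ∑ i, Am m k i * Am m j i * θ i := by
    intro j k
    apply Finset.sum_congr rfl
    intro i _
    ring
  have hSposle : ∀ j k, j ≤ k → 0 < ∑ i, Am m j i * Am m k i * θ i := by
    intro j k hjk
    rw [master θ j k hjk]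
    have hmem : (⟨0, hm⟩ : Fin m) ∈ Iic j := by
      rw [mem_Iic]
      exact Fin.le_def.mpr (Nat.zero_le _)
    have hbase : (1:ℝ) ≤ ∑ i ∈ Iic j, θ i := by
      calc (1:ℝ) = θ ⟨0, hm⟩ := h0.symm
        _ ≤ ∑ i ∈ Iic j, θ i := Finset.single_le_sum (fun i _ => hnn i) hmem
    by_cases hh : (j:ℕ)+1 < m
    · rw [dif_pos hh]
      by_cases hjk' : j = k
      · rw [if_pos hjk']
        have h1 : 0 ≤ (((j:ℕ):ℝ)+1)^2 * θ ⟨(j:ℕ)+1, hh⟩ :=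
          mul_nonneg (sq_nonneg _) (hnn _)
        linarith
      · rw [if_neg hjk']
        have hθ' : θ ⟨(j:ℕ)+1, hh⟩ < 1 := by
          apply hlt
          intro h
          have := congrArg Fin.val h
          simp at this
        have hmono : ∀ i ∈ Iic j, θ ⟨(j:ℕ)+1, hh⟩ ≤ θ i := by
          intro i hi
          rw [mem_Iic] at hi
          apply hdec
          rw [Fin.le_def]
          have : (i:ℕ) ≤ (j:ℕ) := hi
          simp only [Fin.val_mk]
          omega
        have key : 0 < ∑ i ∈ Iic j, (θ i - θ ⟨(j:ℕ)+1, hh⟩) := by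
          apply Finset.sum_pos'
          · intro i hi
            linarith [hmono i hi]
          · exact ⟨⟨0, hm⟩, hmem, by rw [h0]; linarith⟩
        rw [Finset.sum_sub_distrib, sum_Iic_const] at key
        linarith
    · rw [dif_neg hh]
      linarith
  have hSpos : ∀ j k, 0 < ∑ i, Am m j i * Am m k i * θ i := by
    intro j k
    rcases le_or_gt j k with h | h
    · exact hSposle j k h
    · rw [hSsymm]
      exact hSposle k j (le_of_lt h)
  have hPpos : ∀ j k, 0 < (Am m * D * Bm m) j k := by
    intro j k
    rw [hPentry]
    exact mul_pos (hSpos j k) (hmupos k)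
  refine ⟨Am m * D * Bm m, fun j k => le_of_lt (hPpos j k), ?_, fun j k => ⟨1, by
      rw [pow_one]; exact hPpos j k⟩, ?_, ?_⟩
  -- row sums
  · intro j
    have h1 : ∀ k : Fin m, (Am m * D * Bm m) j k
        = ∑ i, (Am m j i * θ i) * (Am m k i * mu m k) := by
      intro k
      rw [hPentry, Finset.sum_mul]
      apply Finset.sum_congr rfl
      intro i _
      ring
    rw [Finset.sum_congr rfl (fun k _ => h1 k), Finset.sum_comm]
    have h2 : ∀ i : Fin m, ∑ k, (Am m j i * θ i) * (Am m k i * mu m k)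
        = (Am m j i * θ i) * (if (i:ℕ) = 0 then 1 else 0) := by
      intro i
      rw [← Finset.mul_sum, colsum hm i]
    rw [Finset.sum_congr rfl (fun i _ => h2 i)]
    rw [Finset.sum_eq_single_of_mem (⟨0, hm⟩ : Fin m) (Finset.mem_univ _)]
    · rw [if_pos rfl, h0, Am_apply_le (Nat.zero_le _)]
      norm_num
    · intro b _ hb
      rw [if_neg (fun h => hb (Fin.ext h)), mul_zero]
  -- reversibility
  · intro j k
    have hj : (if (j:ℕ) = m - 1 then (1 : ℝ) / m
        else 1 / (((j:ℕ) + 1) * ((j:ℕ) + 2))) = mu m j := rfl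
    have hk : (if (k:ℕ) = m - 1 then (1 : ℝ) / m
        else 1 / (((k:ℕ) + 1) * ((k:ℕ) + 2))) = mu m k := rfl
    rw [hj, hk, hPentry, hPentry, hSsymm j k]
    ring
  -- charpoly
  · rw [charpoly_conj (Am m) (Bm m) D hAB, hD, charpoly_diagonal]
end

section
/- Let P be a stochastic matrix on a finite set X, Λ an m×n stochastic matrix with rows ν_x̄, and P̄ a stochastic matrix on X̄ with ΛP = P̄Λ. Let X̂ be the discrete-time chain with kernel P started from ν_x̄. Define a randomized stopping time T by: at each time t ≥ 1, given the past and X̂(t) = y, stop with probability 1 − P̄(x̄,x̄)ν_x̄(y)/(ν_x̄P)(y). Then (i) this stopping probability is well defined (lies in [0,1]), (ii) T is geometric with parameter 1 − P̄(x̄,x̄), and (iii) ν_x̄ is stationary up to T: for all t ≥ 0, P_{ν_x̄}(X̂(t) = · | t < T) = ν_x̄. -/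
open Finset

/-- Diaconis–Fill stopping construction. Given `ΛP = P̄Λ` (rows `ν a`),
start the chain from `ν b` and, at each time `t ≥ 1`, on `X̂(t) = y` stop with probability
`1 − P̄(b,b) ν_b(y)/(ν_b P)(y)`. Encoding the unnormalized surviving law
`σ t y = P(T > t, X̂(t) = y)` by its recursion, we have: (i) the stopping probabilities are
well defined (`P̄(b,b) ν_b(y) ≤ (ν_b P)(y)`, so they lie in `[0,1]`); (ii) `T` is geometric
with parameter `1 − P̄(b,b)`, i.e. `P(T > t) = P̄(b,b)^t`; (iii) `ν_b` is stationary up to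
`T`: `P(X̂(t) = · | t < T) = ν_b`. -/
theorem stmt16 {X Xbar : Type*} [Fintype X] [Fintype Xbar]
    (P : Matrix X X ℝ) (hPnn : ∀ x y, 0 ≤ P x y) (hProw : ∀ x, ∑ y, P x y = 1)
    (ν : Xbar → X → ℝ) (hνnn : ∀ a x, 0 ≤ ν a x) (hνsum : ∀ a, ∑ x, ν a x = 1)
    (Pbar : Matrix Xbar Xbar ℝ) (hPbnn : ∀ a c, 0 ≤ Pbar a c)
    (hPbrow : ∀ a, ∑ c, Pbar a c = 1)
    (hint : ∀ a y, ∑ x, ν a x * P x y = ∑ c, Pbar a c * ν c y)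
    (b : Xbar)
    (σ : ℕ → X → ℝ) (hσ0 : σ 0 = ν b)
    (hσ : ∀ t y, σ (t + 1) y =
      (∑ x, σ t x * P x y) * (Pbar b b * ν b y / ∑ x, ν b x * P x y)) :
    (∀ y, Pbar b b * ν b y ≤ ∑ x, ν b x * P x y) ∧
    (∀ t, ∑ y, σ t y = Pbar b b ^ t) ∧
    (∀ t, (∑ y, σ t y) ≠ 0 → ∀ y, σ t y / (∑ y', σ t y') = ν b y) := by
  have hbound : ∀ y, Pbar b b * ν b y ≤ ∑ x, ν b x * P x y := by
    intro y
    rw [hint b y]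
    exact Finset.single_le_sum (f := fun c => Pbar b c * ν c y)
      (fun c _ => mul_nonneg (hPbnn b c) (hνnn c y)) (Finset.mem_univ b)
  have hkey : ∀ t y, σ t y = Pbar b b ^ t * ν b y := by
    intro t
    induction t with
    | zero => intro y; simp [hσ0]
    | succ t ih =>
      intro y
      rw [hσ t y]
      by_cases h : (∑ x, ν b x * P x y) = 0
      · have h0 : Pbar b b * ν b y = 0 := by
          have := hbound y
          rw [h] at this
          exact le_antisymm this (mul_nonneg (hPbnn b b) (hνnn b y))
        rw [h]
        simp [pow_succ, mul_assoc, h0]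
      · have : (∑ x, σ t x * P x y) = Pbar b b ^ t * ∑ x, ν b x * P x y := by
          rw [Finset.mul_sum]
          exact Finset.sum_congr rfl fun x _ => by rw [ih x]; ring
        rw [this]
        field_simp
        ring
  have hsum : ∀ t, ∑ y, σ t y = Pbar b b ^ t := by
    intro t
    simp only [hkey, ← Finset.mul_sum, hνsum b, mul_one]
  refine ⟨hbound, hsum, fun t ht y => ?_⟩
  rw [hkey t y, hsum t]
  rw [hsum t] at ht
  field_simp
end

section
/- With the setting of the Diaconis–Fill construction (ΛP = P̄Λ, randomized stopping time T = T_x̄ and mark Ȳ_x̄ as constructed), conditionally on stopping at time 1 with X̂(1) = y, the probability that the mark equals ȳ ≠ x̄ is P̄(x̄,ȳ)ν_ȳ(y) / ((ν_x̄P)(y) − P̄(x̄,x̄)ν_x̄(y)); consequently P_{ν_x̄}(X̂(T) = · | Ȳ_x̄ = ȳ) = ν_ȳ(·) and P_{ν_x̄}(Ȳ_x̄ = ȳ) = P̄(x̄,ȳ)/(1 − P̄(x̄,x̄)). -/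
open Finset

/-- Diaconis–Fill construction with marks. With `ΛP = P̄Λ`, start from `ν b`,
stop at each step on state `y` with probability `1 − P̄(b,b)ν_b(y)/(ν_bP)(y)` and, upon
stopping at `y`, choose the mark `c ≠ b` with probability `P̄(b,c)ν_c(y)/D(y)` where
`D(y) = (ν_bP)(y) − P̄(b,b)ν_b(y)`. Encoding the joint law
`J t c y = P(T = t+1, Ȳ = c, X̂(T) = y)`: (i) the mark probabilities are well defined
(`∑_{c≠b} P̄(b,c)ν_c(y) = D(y)`); (ii) `P(Ȳ = c, X̂(T) = y) = (P̄(b,c)/(1−P̄(b,b)))ν_c(y)`;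
(iii) `P(Ȳ = c) = P̄(b,c)/(1−P̄(b,b))`; (iv) `P(X̂(T) = · | Ȳ = c) = ν_c`; and (v) `(Ȳ, X̂(T))`
is independent of `T`: the joint law factorizes as `P(T = t+1)·P(Ȳ = c, X̂(T) = y)`. -/
theorem stmt17 {X Xbar : Type*} [Fintype X] [Fintype Xbar] [DecidableEq Xbar]
    (P : Matrix X X ℝ) (hPnn : ∀ x y, 0 ≤ P x y) (hProw : ∀ x, ∑ y, P x y = 1)
    (ν : Xbar → X → ℝ) (hνnn : ∀ a x, 0 ≤ ν a x) (hνsum : ∀ a, ∑ x, ν a x = 1)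
    (Pbar : Matrix Xbar Xbar ℝ) (hPbnn : ∀ a c, 0 ≤ Pbar a c)
    (hPbrow : ∀ a, ∑ c, Pbar a c = 1)
    (hint : ∀ a y, ∑ x, ν a x * P x y = ∑ c, Pbar a c * ν c y)
    (b : Xbar) (hb : Pbar b b < 1)
    (D : X → ℝ) (hD : ∀ y, D y = (∑ x, ν b x * P x y) - Pbar b b * ν b y)
    (J : ℕ → Xbar → X → ℝ)
    (hJ : ∀ t c y, J t c y = Pbar b b ^ t * (D y * (Pbar b c * ν c y / D y))) :
    (∀ y, ∑ c ∈ Finset.univ.erase b, Pbar b c * ν c y = D y) ∧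
    (∀ c, c ≠ b → ∀ y, (∑' t : ℕ, J t c y) = Pbar b c / (1 - Pbar b b) * ν c y) ∧
    (∀ c, c ≠ b → (∑' t : ℕ, ∑ y, J t c y) = Pbar b c / (1 - Pbar b b)) ∧
    (∀ c, c ≠ b → Pbar b c ≠ 0 →
      ∀ y, (∑' t : ℕ, J t c y) / (∑' t : ℕ, ∑ y', J t c y') = ν c y) ∧
    (∀ t : ℕ, ∀ c, c ≠ b → ∀ y,
      J t c y = (Pbar b b ^ t * (1 - Pbar b b)) * ∑' s : ℕ, J s c y) := by
  have hr0 : 0 ≤ Pbar b b := hPbnn b b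
  have hr1 : (1 : ℝ) - Pbar b b ≠ 0 := by linarith
  have h1 : ∀ y, ∑ c ∈ Finset.univ.erase b, Pbar b c * ν c y = D y := by
    intro y
    have := Finset.add_sum_erase Finset.univ (fun c => Pbar b c * ν c y) (Finset.mem_univ b)
    rw [hD, hint b y]
    linarith
  have key : ∀ c, c ≠ b → ∀ y, D y * (Pbar b c * ν c y / D y) = Pbar b c * ν c y := by
    intro c hc y
    rcases eq_or_ne (D y) 0 with hDy | hDy
    · have hz : Pbar b c * ν c y = 0 := by
        have hsum := h1 y
        rw [hDy] at hsum
        have := (Finset.sum_eq_zero_iff_of_nonneg (fun c _ => mul_nonneg (hPbnn b c) (hνnn c y))).mp hsum c (Finset.mem_erase.mpr ⟨hc, Finset.mem_univ c⟩)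
        exact this
      rw [hz, hDy]; ring
    · rw [mul_div_cancel₀ _ hDy]
  have hgeo : ∑' t : ℕ, (Pbar b b) ^ t = (1 - Pbar b b)⁻¹ :=
    tsum_geometric_of_lt_one hr0 hb
  have h2 : ∀ c, c ≠ b → ∀ y, (∑' t : ℕ, J t c y) = Pbar b c / (1 - Pbar b b) * ν c y := by
    intro c hc y
    have : ∀ t : ℕ, J t c y = (Pbar b b) ^ t * (Pbar b c * ν c y) := by
      intro t; rw [hJ, key c hc]
    rw [tsum_congr this, tsum_mul_right, hgeo]
    rw [div_eq_mul_inv]; ring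
  have h3 : ∀ c, c ≠ b → (∑' t : ℕ, ∑ y, J t c y) = Pbar b c / (1 - Pbar b b) := by
    intro c hc
    have : ∀ t : ℕ, ∑ y, J t c y = (Pbar b b) ^ t * Pbar b c := by
      intro t
      have : ∀ y : X, J t c y = (Pbar b b) ^ t * (Pbar b c * ν c y) := by
        intro y; rw [hJ, key c hc]
      simp only [this, ← Finset.mul_sum, hνsum c, mul_one]
    rw [tsum_congr this, tsum_mul_right, hgeo]
    field_simp
  refine ⟨h1, h2, h3, ?_, ?_⟩
  · intro c hc hc0 y
    rw [h2 c hc y, h3 c hc]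
    have : Pbar b c / (1 - Pbar b b) ≠ 0 := div_ne_zero hc0 hr1
    field_simp
  · intro t c hc y
    rw [h2 c hc y, hJ, key c hc]
    field_simp
end
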